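/- The number of order-preserving partial isometries of the cycle graph C_n equals 3·2^n + (n+1)n(n-1)/6 - ((1+(-1)^n)/8)·n² - 2n - 2. -/

import Mathlib

/-- The cycle-graph distance on `{1,…,n}`. -/
def cycDist (n x y : ℕ) : ℕ :=
  min (max x y - min x y) (n - (max x y - min x y))

/-- `α : ℕ → Option ℕ` (with `α x = some u` meaning `xα = u`) is a partial
isometry of the cycle graph `C_n`: an injective partial map on `{1,…,n}`
preserving the cycle distance. -/
def IsPartialIsometry (n : ℕ) (α : ℕ → Option ℕ) : Prop :=
  (∀ x u, α x = some u → 1 ≤ x ∧ x ≤ n ∧ 1 ≤ u ∧ u ≤ n) ∧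
  (∀ x y u, α x = some u → α y = some u → x = y) ∧
  (∀ x y u v, α x = some u → α y = some v → cycDist n u v = cycDist n x y)

/-- `α` is order-preserving. -/
def IsOrderPres (α : ℕ → Option ℕ) : Prop :=
  ∀ x y u v, α x = some u → α y = some v → x ≤ y → u ≤ v

lemma cycDist_le (n x y : ℕ) (h : x ≤ y) : cycDist n x y = min (y - x) (n - (y - x)) := by
  simp [cycDist, max_eq_right h, min_eq_left h]

lemma cycDist_triple (n x y z u v w : ℕ) (h1:1≤x)(h2:x<y)(h3:y<z)(h4:z≤n)(h5:1≤u)(h6:u<v)(h7:v<w)(h8:w≤n)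
    (e1 : cycDist n u v = cycDist n x y) (e2 : cycDist n v w = cycDist n y z)
    (e3 : cycDist n u w = cycDist n x z) : v - u = y - x ∧ w - v = z - y := by
  rw [cycDist_le n u v (by omega), cycDist_le n x y (by omega), cycDist_le n v w (by omega),
    cycDist_le n y z (by omega), cycDist_le n u w (by omega), cycDist_le n x z (by omega)] at *
  omega

lemma cycDist_pairGap (n x y u v : ℕ) (h1:1≤x)(h2:x<y)(h3:y≤n)(h5:u<v) :
    cycDist n u v = cycDist n x y ↔ (v - u = y - x ∨ v - u = n - (y - x)) := by
  rw [cycDist_le n u v (by omega), cycDist_le n x y (by omega)]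
  omega

lemma cycDist_shift (n a b c d : ℕ) (h : a + d = b + c) : cycDist n a b = cycDist n c d := by
  simp only [cycDist]; omega

lemma cycDist_comm (n p q : ℕ) : cycDist n p q = cycDist n q p := by
  simp only [cycDist]; omega

/-- encodings -/
def singleMap (x u : ℕ) : ℕ → Option ℕ := fun z => if z = x then some u else none
def pairMap (x y u v : ℕ) : ℕ → Option ℕ :=
  fun z => if z = x then some u else if z = y then some v else none
def shiftMap (t : ℤ) (D : Finset ℕ) : ℕ → Option ℕ :=
  fun z => if z ∈ D then some ((z : ℤ) + t).toNat else none

lemma singleMap_some {x u a c : ℕ} (h : singleMap x u a = some c) : a = x ∧ c = u := by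
  simp only [singleMap] at h; split_ifs at h <;> simp_all [eq_comm]

lemma pairMap_some {x y u v a c : ℕ} (h : pairMap x y u v a = some c) :
    (a = x ∧ c = u) ∨ (a ≠ x ∧ a = y ∧ c = v) := by
  simp only [pairMap] at h; split_ifs at h <;> simp_all [eq_comm]

lemma shiftMap_some {t : ℤ} {D : Finset ℕ} {a c : ℕ} (h : shiftMap t D a = some c) :
    a ∈ D ∧ c = ((a : ℤ) + t).toNat := by
  simp only [shiftMap] at h; split_ifs at h <;> simp_all [eq_comm]

lemma empty_mem (n : ℕ) : IsPartialIsometry n (fun _ => none) ∧ IsOrderPres (fun _ => none) := by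
  refine ⟨⟨?_, ?_, ?_⟩, ?_⟩ <;> intro x <;> simp

lemma single_mem (n x u : ℕ) (hx : 1 ≤ x) (hx2 : x ≤ n) (hu : 1 ≤ u) (hu2 : u ≤ n) :
    IsPartialIsometry n (singleMap x u) ∧ IsOrderPres (singleMap x u) := by
  refine ⟨⟨?_, ?_, ?_⟩, ?_⟩
  · intro a c h; obtain ⟨rfl, rfl⟩ := singleMap_some h; exact ⟨hx, hx2, hu, hu2⟩
  · intro a b c h1 h2
    obtain ⟨rfl, rfl⟩ := singleMap_some h1; obtain ⟨rfl, -⟩ := singleMap_some h2; rfl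
  · intro a b c d h1 h2
    obtain ⟨rfl, rfl⟩ := singleMap_some h1; obtain ⟨rfl, rfl⟩ := singleMap_some h2
    exact cycDist_shift n _ _ _ _ (by omega)
  · intro a b c d h1 h2 _
    obtain ⟨rfl, rfl⟩ := singleMap_some h1; obtain ⟨rfl, rfl⟩ := singleMap_some h2; exact le_refl _

lemma pair_mem (n x y u v : ℕ) (hx : 1 ≤ x) (hxy : x < y) (hy : y ≤ n)
    (hu : 1 ≤ u) (huv : u < v) (hv : v ≤ n)
    (hgap : v - u = y - x ∨ v - u = n - (y - x)) :
    IsPartialIsometry n (pairMap x y u v) ∧ IsOrderPres (pairMap x y u v) := by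
  have key : cycDist n u v = cycDist n x y := (cycDist_pairGap n x y u v hx hxy hy huv).2 hgap
  refine ⟨⟨?_, ?_, ?_⟩, ?_⟩
  · intro a c h; rcases pairMap_some h with ⟨rfl, rfl⟩ | ⟨-, rfl, rfl⟩ <;> omega
  · intro a b c h1 h2
    rcases pairMap_some h1 with ⟨rfl, rfl⟩ | ⟨h, rfl, rfl⟩ <;>
      rcases pairMap_some h2 with ⟨rfl, e⟩ | ⟨h', rfl, e⟩ <;> omega
  · intro a b c d h1 h2
    rcases pairMap_some h1 with ⟨rfl, rfl⟩ | ⟨h, rfl, rfl⟩ <;>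
      rcases pairMap_some h2 with ⟨rfl, rfl⟩ | ⟨h', rfl, rfl⟩
    · exact cycDist_shift n _ _ _ _ (by omega)
    · exact key
    · rw [cycDist_comm, key, cycDist_comm]
    · exact cycDist_shift n _ _ _ _ (by omega)
  · intro a b c d h1 h2 hab
    rcases pairMap_some h1 with ⟨rfl, rfl⟩ | ⟨h, rfl, rfl⟩ <;>
      rcases pairMap_some h2 with ⟨rfl, rfl⟩ | ⟨h', rfl, rfl⟩ <;> omega

lemma shift_mem (n : ℕ) (t : ℤ) (D : Finset ℕ) (hD : D ⊆ Finset.Icc 1 n)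
    (hb : ∀ z ∈ D, 1 ≤ (z : ℤ) + t ∧ (z : ℤ) + t ≤ n) :
    IsPartialIsometry n (shiftMap t D) ∧ IsOrderPres (shiftMap t D) := by
  refine ⟨⟨?_, ?_, ?_⟩, ?_⟩
  · intro a c h; obtain ⟨ha, rfl⟩ := shiftMap_some h
    have h1 := Finset.mem_Icc.1 (hD ha); have h2 := hb a ha; omega
  · intro a b c h1 h2
    obtain ⟨ha, rfl⟩ := shiftMap_some h1; obtain ⟨hbb, e⟩ := shiftMap_some h2
    have := hb a ha; have := hb b hbb; omega
  · intro a b c d h1 h2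
    obtain ⟨ha, rfl⟩ := shiftMap_some h1; obtain ⟨hbb, rfl⟩ := shiftMap_some h2
    have := hb a ha; have := hb b hbb
    exact cycDist_shift n _ _ _ _ (by omega)
  · intro a b c d h1 h2 hab
    obtain ⟨ha, rfl⟩ := shiftMap_some h1; obtain ⟨hbb, rfl⟩ := shiftMap_some h2
    have := hb a ha; have := hb b hbb; omega

open Finset in
def A1 (n : ℕ) : Finset (ℕ × ℕ) := Icc 1 n ×ˢ Icc 1 n
open Finset in
def A2a (n : ℕ) : Finset (ℕ × ℕ × ℕ) :=
  (Icc 1 n ×ˢ Icc 1 n ×ˢ Icc 1 n).filter (fun p => p.2.1 + p.1 ≤ n ∧ p.2.2 + p.1 ≤ n)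
open Finset in
def A2b (n : ℕ) : Finset (ℕ × ℕ × ℕ) :=
  (Icc 1 n ×ˢ Icc 1 n ×ˢ Icc 1 n).filter
    (fun p => p.2.1 + p.1 ≤ n ∧ p.2.2 ≤ p.1 ∧ 2 * p.1 ≠ n)
open Finset in
noncomputable def A3 (n : ℕ) : Finset (ℤ × Finset ℕ) :=
  ((Finset.Icc (-(n:ℤ)) n) ×ˢ (Icc 1 n).powerset).filter
    (fun p => 3 ≤ p.2.card ∧ ∀ x ∈ p.2, 1 ≤ (x:ℤ) + p.1 ∧ (x:ℤ) + p.1 ≤ n)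

noncomputable instance : DecidableEq (ℕ → Option ℕ) := Classical.decEq _

open Finset in
noncomputable def FF (n : ℕ) : Finset (ℕ → Option ℕ) :=
  {(fun _ => none : ℕ → Option ℕ)} ∪ (A1 n).image (fun p => singleMap p.1 p.2)
    ∪ (A2a n).image (fun p => pairMap p.2.1 (p.2.1 + p.1) p.2.2 (p.2.2 + p.1))
    ∪ (A2b n).image (fun p => pairMap p.2.1 (p.2.1 + p.1) p.2.2 (p.2.2 + (n - p.1)))
    ∪ (A3 n).image (fun p => shiftMap p.1 p.2)

lemma mem_FF_of_mem (n : ℕ) (hn : 3 ≤ n) (α : ℕ → Option ℕ)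
    (hα : IsPartialIsometry n α ∧ IsOrderPres α) : α ∈ FF n := by
  classical
  obtain ⟨⟨hb, hinj, hiso⟩, hord⟩ := hα
  set D : Finset ℕ := (Finset.Icc 1 n).filter (fun z => (α z).isSome) with hDdef
  have hmemD : ∀ z u, α z = some u → z ∈ D := by
    intro z u h
    have := hb z u h
    simp [hDdef, Finset.mem_filter, Finset.mem_Icc, h]; omega
  have hnone : ∀ z, z ∉ D → α z = none := by
    intro z hz
    cases h : α z with
    | none => rfl
    | some u => exact absurd (hmemD z u h) hz
  have hDmem : ∀ z ∈ D, ∃ u, α z = some u := by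
    intro z hz
    simp only [hDdef, Finset.mem_filter] at hz
    exact Option.isSome_iff_exists.1 hz.2
  have hsm : ∀ p q u v, α p = some u → α q = some v → p < q → u < v := by
    intro p q u v h1 h2 hpq
    rcases Nat.lt_or_ge u v with h | h
    · exact h
    · have huv : u ≤ v := hord p q u v h1 h2 (le_of_lt hpq)
      have : u = v := le_antisymm huv h
      subst this
      exact absurd (hinj p q u h1 h2) (Nat.ne_of_lt hpq)
  simp only [FF, Finset.mem_union]
  rcases Nat.lt_or_ge D.card 3 with h3 | h3
  · have hc : D.card = 0 ∨ D.card = 1 ∨ D.card = 2 := by omega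
    rcases hc with hc | hc | hc
    · -- empty
      left; left; left; left
      have hαe : α = (fun _ => none : ℕ → Option ℕ) := by
        funext z
        exact hnone z (by simp [Finset.card_eq_zero.1 hc])
      rw [hαe]
      exact Finset.mem_singleton_self _
    · -- singleton
      left; left; left; right
      obtain ⟨x, hx⟩ := Finset.card_eq_one.1 hc
      obtain ⟨u, hu⟩ := hDmem x (by simp [hx])
      have hbx := hb x u hu
      simp only [Finset.mem_image]
      refine ⟨(x, u), by simp [A1, Finset.mem_Icc]; omega, ?_⟩
      symm
      funext z
      by_cases hz : z = x
      · subst hz; simp [singleMap, hu]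
      · simp only [singleMap, if_neg hz]
        exact hnone z (by simp [hx, hz])
    · -- pair
      obtain ⟨x, y, hxy, hD2⟩ := Finset.card_eq_two.1 hc
      wlog hlt : x < y generalizing x y
      · exact this y x hxy.symm (by rw [hD2]; exact Finset.pair_comm x y) (by omega)
      obtain ⟨u, hu⟩ := hDmem x (by simp [hD2])
      obtain ⟨v, hv⟩ := hDmem y (by simp [hD2])
      have hbx := hb x u hu
      have hby := hb y v hv
      have huv : u < v := hsm x y u v hu hv hlt
      have hgap : v - u = y - x ∨ v - u = n - (y - x) :=
        (cycDist_pairGap n x y u v (by omega) hlt (by omega) huv).1 (hiso x y u v hu hv)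
      have hmap : α = pairMap x y u v := by
        funext z
        by_cases hz1 : z = x
        · subst hz1; simp [pairMap, hu]
        · by_cases hz2 : z = y
          · subst hz2; simp [pairMap, hz1, hv]
          · simp only [pairMap, if_neg hz1, if_neg hz2]
            exact hnone z (by simp [hD2, hz1, hz2])
      have e1 : x + (y - x) = y := by omega
      by_cases hcase : v - u = y - x
      · left; left; right
        simp only [Finset.mem_image]
        refine ⟨(y - x, x, u), ?_, ?_⟩
        · simp only [A2a, Finset.mem_filter, Finset.mem_product, Finset.mem_Icc]; omega
        · have e2 : u + (y - x) = v := by omega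
          rw [e1, e2, hmap]
      · left; right
        have hgap2 : v - u = n - (y - x) := hgap.resolve_left hcase
        simp only [Finset.mem_image]
        refine ⟨(y - x, x, u), ?_, ?_⟩
        · simp only [A2b, Finset.mem_filter, Finset.mem_product, Finset.mem_Icc]; omega
        · have e2 : u + (n - (y - x)) = v := by omega
          rw [e1, e2, hmap]
  · -- card ≥ 3 : shift
    right
    have hne : D.Nonempty := Finset.card_pos.1 (by omega)
    have hthird : ∀ p q, ∃ r ∈ D, r ≠ p ∧ r ≠ q := by
      intro p q
      by_contra hcon
      push_neg at hcon
      have hsub : D ⊆ {p, q} := by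
        intro r hr
        rcases eq_or_ne r p with h' | h'
        · simp [h']
        · simp [hcon r hr h']
      have := Finset.card_le_card hsub
      have h2 : ({p, q} : Finset ℕ).card ≤ 2 := Finset.card_insert_le _ _ |>.trans (by simp)
      omega
    -- gap preservation
    have hgap : ∀ p q up uq, α p = some up → α q = some uq → p < q → uq - up = q - p := by
      intro p q up uq hp hq hpq
      obtain ⟨r, hrD, hrp, hrq⟩ := hthird p q
      obtain ⟨w, hw⟩ := hDmem r hrD
      have hbp := hb p up hp
      have hbq := hb q uq hq
      have hbr := hb r w hw
      rcases Nat.lt_trichotomy r p with h | h | h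
      · have h1 := hsm r p w up hw hp h
        have h2 := hsm p q up uq hp hq hpq
        exact (cycDist_triple n r p q w up uq (by omega) h hpq (by omega) (by omega) h1 h2
          (by omega) (hiso r p w up hw hp) (hiso p q up uq hp hq) (hiso r q w uq hw hq)).2
      · exact absurd h hrp
      · rcases Nat.lt_trichotomy r q with h' | h' | h'
        · have h1 := hsm p r up w hp hw h
          have h2 := hsm r q w uq hw hq h'
          have t := cycDist_triple n p r q up w uq (by omega) h h' (by omega) (by omega) h1 h2
            (by omega) (hiso p r up w hp hw) (hiso r q w uq hw hq) (hiso p q up uq hp hq)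
          omega
        · exact absurd h' hrq
        · have h1 := hsm p q up uq hp hq hpq
          have h2 := hsm q r uq w hq hw h'
          exact (cycDist_triple n p q r up uq w (by omega) hpq h' (by omega) (by omega) h1 h2
            (by omega) (hiso p q up uq hp hq) (hiso q r uq w hq hw) (hiso p r up w hp hw)).1
    obtain ⟨x0, hx0D⟩ := hne
    obtain ⟨u0, hu0⟩ := hDmem x0 hx0D
    have hbx0 := hb x0 u0 hu0
    set t : ℤ := (u0 : ℤ) - x0 with ht
    have hval : ∀ z v, α z = some v → (v : ℤ) = z + t := by
      intro z v hz
      rcases Nat.lt_trichotomy z x0 with h | h | h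
      · have := hgap z x0 v u0 hz hu0 h
        have := hsm z x0 v u0 hz hu0 h
        omega
      · subst h
        rw [hu0] at hz
        have : u0 = v := by injection hz
        omega
      · have := hgap x0 z u0 v hu0 hz h
        have := hsm x0 z u0 v hu0 hz h
        omega
    simp only [Finset.mem_image]
    refine ⟨(t, D), ?_, ?_⟩
    · simp only [A3, Finset.mem_filter, Finset.mem_product, Finset.mem_powerset, Finset.mem_Icc]
      refine ⟨⟨by omega, fun z hz => Finset.mem_of_mem_filter z hz⟩, h3, ?_⟩
      intro z hz
      obtain ⟨v, hv⟩ := hDmem z hz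
      have := hb z v hv
      have := hval z v hv
      omega
    · symm
      funext z
      by_cases hz : z ∈ D
      · obtain ⟨v, hv⟩ := hDmem z hz
        have := hval z v hv
        rw [hv]
        simp only [shiftMap, if_pos hz]
        congr 1
        omega
      · simp only [shiftMap, if_neg hz]
        exact hnone z hz

lemma mem_of_mem_FF (n : ℕ) (α : ℕ → Option ℕ) (h : α ∈ FF n) :
    IsPartialIsometry n α ∧ IsOrderPres α := by
  simp only [FF, Finset.mem_union, Finset.mem_image] at h
  rcases h with ((((h | ⟨⟨x, u⟩, hm, rfl⟩) | ⟨⟨a, x, u⟩, hm, rfl⟩) | ⟨⟨a, x, u⟩, hm, rfl⟩) |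
    ⟨⟨t, D⟩, hm, rfl⟩)
  · rw [Finset.mem_singleton] at h
    subst h
    exact empty_mem n
  · simp only [A1, Finset.mem_product, Finset.mem_Icc] at hm
    exact single_mem n x u hm.1.1 hm.1.2 hm.2.1 hm.2.2
  · simp only [A2a, Finset.mem_filter, Finset.mem_product, Finset.mem_Icc] at hm
    exact pair_mem n x (x + a) u (u + a) (by omega) (by omega) (by omega) (by omega) (by omega)
      (by omega) (Or.inl (by omega))
  · simp only [A2b, Finset.mem_filter, Finset.mem_product, Finset.mem_Icc] at hm
    exact pair_mem n x (x + a) u (u + (n - a)) (by omega) (by omega) (by omega) (by omega)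
      (by omega) (by omega) (Or.inr (by omega))
  · simp only [A3, Finset.mem_filter, Finset.mem_product, Finset.mem_powerset] at hm
    exact shift_mem n t D hm.1.2 hm.2.2

lemma set_eq_FF (n : ℕ) (hn : 3 ≤ n) :
    {α : ℕ → Option ℕ | IsPartialIsometry n α ∧ IsOrderPres α} = ↑(FF n) := by
  ext α
  exact ⟨fun h => mem_FF_of_mem n hn α h, fun h => mem_of_mem_FF n α h⟩

def Dof (n : ℕ) (α : ℕ → Option ℕ) : Finset ℕ :=
  (Finset.Icc 1 n).filter (fun z => (α z).isSome)

lemma Dof_empty (n : ℕ) : Dof n (fun _ => none) = ∅ := by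
  simp [Dof]

lemma Dof_single (n x u : ℕ) (h1 : 1 ≤ x) (h2 : x ≤ n) : Dof n (singleMap x u) = {x} := by
  ext z
  simp only [Dof, Finset.mem_filter, Finset.mem_Icc, Finset.mem_singleton]
  simp only [singleMap]
  constructor
  · rintro ⟨-, hs⟩
    by_contra hz
    rw [if_neg hz] at hs
    simp at hs
  · rintro rfl
    simp [h1, h2]

lemma Dof_pair (n x y u v : ℕ) (h1 : 1 ≤ x) (h2 : x ≤ n) (h3 : 1 ≤ y) (h4 : y ≤ n) :
    Dof n (pairMap x y u v) = {x, y} := by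
  ext z
  simp only [Dof, Finset.mem_filter, Finset.mem_Icc, Finset.mem_insert, Finset.mem_singleton]
  simp only [pairMap]
  constructor
  · rintro ⟨-, hs⟩
    by_contra hz
    push_neg at hz
    rw [if_neg hz.1, if_neg hz.2] at hs
    simp at hs
  · rintro (rfl | rfl)
    · simp [h1, h2]
    · rcases eq_or_ne z x with rfl | hzx
      · simp [h1, h2]
      · simp [h3, h4, hzx]

lemma Dof_shift (n : ℕ) (t : ℤ) (D : Finset ℕ) (hD : D ⊆ Finset.Icc 1 n) :
    Dof n (shiftMap t D) = D := by
  ext z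
  simp only [Dof, Finset.mem_filter, Finset.mem_Icc]
  simp only [shiftMap]
  constructor
  · rintro ⟨-, hs⟩
    by_contra hz
    rw [if_neg hz] at hs
    simp at hs
  · intro hz
    have := Finset.mem_Icc.1 (hD hz)
    simp [hz, this.1, this.2]

lemma pairMap_inj {x y u v x' y' u' v' : ℕ} (h1 : x < y) (h2 : x' < y')
    (h : pairMap x y u v = pairMap x' y' u' v') : x = x' ∧ y = y' ∧ u = u' ∧ v = v' := by
  have ha : pairMap x' y' u' v' x = some u := by
    rw [← h]; simp [pairMap]
  have hb : pairMap x' y' u' v' y = some v := by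
    rw [← h]; simp [pairMap, Nat.ne_of_gt h1]
  have hc : pairMap x y u v x' = some u' := by
    rw [h]; simp [pairMap]
  have hd : pairMap x y u v y' = some v' := by
    rw [h]; simp [pairMap, Nat.ne_of_gt h2]
  rcases pairMap_some ha with ⟨e1, e2⟩ | ⟨e1, e2, e3⟩ <;>
    rcases pairMap_some hb with ⟨f1, f2⟩ | ⟨f1, f2, f3⟩ <;>
      rcases pairMap_some hc with ⟨g1, g2⟩ | ⟨g1, g2, g3⟩ <;>
        rcases pairMap_some hd with ⟨k1, k2⟩ | ⟨k1, k2, k3⟩ <;> omega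

open Finset in
lemma card_FF (n : ℕ) :
    (FF n).card = 1 + (A1 n).card + (A2a n).card + (A2b n).card + (A3 n).card := by
  have mem1 : ∀ α ∈ (A1 n).image (fun p => singleMap p.1 p.2), (Dof n α).card = 1 := by
    intro α hα
    simp only [mem_image] at hα
    obtain ⟨⟨x, u⟩, hm, rfl⟩ := hα
    simp only [A1, mem_product, mem_Icc] at hm
    rw [Dof_single n x u hm.1.1 hm.1.2]
    simp
  have mem2a : ∀ α ∈ (A2a n).image (fun p => pairMap p.2.1 (p.2.1 + p.1) p.2.2 (p.2.2 + p.1)),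
      (Dof n α).card = 2 := by
    intro α hα
    simp only [mem_image] at hα
    obtain ⟨⟨a, x, u⟩, hm, rfl⟩ := hα
    simp only [A2a, mem_filter, mem_product, mem_Icc] at hm
    rw [Dof_pair n x (x + a) u (u + a) (by omega) (by omega) (by omega) (by omega)]
    rw [Finset.card_pair (by omega)]
  have mem2b : ∀ α ∈ (A2b n).image (fun p => pairMap p.2.1 (p.2.1 + p.1) p.2.2 (p.2.2 + (n - p.1))),
      (Dof n α).card = 2 := by
    intro α hα
    simp only [mem_image] at hα
    obtain ⟨⟨a, x, u⟩, hm, rfl⟩ := hα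
    simp only [A2b, mem_filter, mem_product, mem_Icc] at hm
    rw [Dof_pair n x (x + a) u (u + (n - a)) (by omega) (by omega) (by omega) (by omega)]
    rw [Finset.card_pair (by omega)]
  have mem3 : ∀ α ∈ (A3 n).image (fun p => shiftMap p.1 p.2), 3 ≤ (Dof n α).card := by
    intro α hα
    simp only [mem_image] at hα
    obtain ⟨⟨t, D⟩, hm, rfl⟩ := hα
    simp only [A3, mem_filter, mem_product, mem_powerset] at hm
    rw [Dof_shift n t D hm.1.2]
    exact hm.2.1
  have memE : ∀ α ∈ ({(fun _ => none : ℕ → Option ℕ)} : Finset (ℕ → Option ℕ)),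
      (Dof n α).card = 0 := by
    intro α hα
    rw [Finset.mem_singleton] at hα
    subst hα
    simp [Dof_empty]
  set E : Finset (ℕ → Option ℕ) := {(fun _ => none : ℕ → Option ℕ)} with hE
  set I1 := (A1 n).image (fun p => singleMap p.1 p.2) with hI1
  set I2a := (A2a n).image (fun p => pairMap p.2.1 (p.2.1 + p.1) p.2.2 (p.2.2 + p.1)) with hI2a
  set I2b := (A2b n).image
    (fun p => pairMap p.2.1 (p.2.1 + p.1) p.2.2 (p.2.2 + (n - p.1))) with hI2b
  set I3 := (A3 n).image (fun p => shiftMap p.1 p.2) with hI3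
  have d1 : Disjoint E I1 := by
    rw [Finset.disjoint_left]
    intro α h h'
    have := memE α h; have := mem1 α h'; omega
  have d2 : Disjoint (E ∪ I1) I2a := by
    rw [Finset.disjoint_left]
    intro α h h'
    have h2 := mem2a α h'
    rcases Finset.mem_union.1 h with h | h
    · have := memE α h; omega
    · have := mem1 α h; omega
  have d3 : Disjoint (E ∪ I1 ∪ I2a) I2b := by
    rw [Finset.disjoint_left]
    intro α h h'
    have h2 := mem2b α h'
    rcases Finset.mem_union.1 h with h | h
    · rcases Finset.mem_union.1 h with h | h
      · have := memE α h; omega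
      · have := mem1 α h; omega
    · simp only [hI2a, hI2b, Finset.mem_image] at h h'
      obtain ⟨⟨a, x, u⟩, hm, he⟩ := h
      obtain ⟨⟨a', x', u'⟩, hm', he'⟩ := h'
      simp only [A2a, Finset.mem_filter, Finset.mem_product, Finset.mem_Icc] at hm
      simp only [A2b, Finset.mem_filter, Finset.mem_product, Finset.mem_Icc] at hm'
      rw [← he'] at he
      obtain ⟨e1, e2, e3, e4⟩ := pairMap_inj (by omega) (by omega) he
      omega
  have d4 : Disjoint (E ∪ I1 ∪ I2a ∪ I2b) I3 := by
    rw [Finset.disjoint_left]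
    intro α h h'
    have h3 := mem3 α h'
    rcases Finset.mem_union.1 h with h | h
    · rcases Finset.mem_union.1 h with h | h
      · rcases Finset.mem_union.1 h with h | h
        · have := memE α h; omega
        · have := mem1 α h; omega
      · have := mem2a α h; omega
    · have := mem2b α h; omega
  rw [FF, ← hE, ← hI1, ← hI2a, ← hI2b, ← hI3]
  rw [Finset.card_union_of_disjoint d4, Finset.card_union_of_disjoint d3,
    Finset.card_union_of_disjoint d2, Finset.card_union_of_disjoint d1]
  have cE : E.card = 1 := by rw [hE]; exact Finset.card_singleton _
  have c1 : I1.card = (A1 n).card := by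
    rw [hI1, Finset.card_image_of_injOn]
    intro ⟨x, u⟩ _ ⟨x', u'⟩ _ h
    dsimp only at h
    have h1 : singleMap x' u' x = some u := by rw [← h]; simp [singleMap]
    obtain ⟨e1, e2⟩ := singleMap_some h1
    simp [Prod.mk.injEq, e1, e2]
  have c2a : I2a.card = (A2a n).card := by
    rw [hI2a, Finset.card_image_of_injOn]
    intro ⟨a, x, u⟩ hm ⟨a', x', u'⟩ hm' h
    dsimp only at h
    simp only [A2a, Finset.mem_coe, Finset.mem_filter, Finset.mem_product,
      Finset.mem_Icc] at hm hm'

    obtain ⟨e1, e2, e3, e4⟩ := pairMap_inj (by omega) (by omega) h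
    simp only [Prod.mk.injEq]
    omega
  have c2b : I2b.card = (A2b n).card := by
    rw [hI2b, Finset.card_image_of_injOn]
    intro ⟨a, x, u⟩ hm ⟨a', x', u'⟩ hm' h
    dsimp only at h
    simp only [A2b, Finset.mem_coe, Finset.mem_filter, Finset.mem_product,
      Finset.mem_Icc] at hm hm'

    obtain ⟨e1, e2, e3, e4⟩ := pairMap_inj (by omega) (by omega) h
    simp only [Prod.mk.injEq]
    omega
  have c3 : I3.card = (A3 n).card := by
    rw [hI3, Finset.card_image_of_injOn]
    intro ⟨t, D⟩ hm ⟨t', D'⟩ hm' h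
    dsimp only at h
    simp only [A3, Finset.mem_coe, Finset.mem_filter, Finset.mem_product,
      Finset.mem_powerset] at hm hm'
    have hDD : D = D' := by
      rw [← Dof_shift n t D hm.1.2, ← Dof_shift n t' D' hm'.1.2, h]
    subst hDD
    obtain ⟨z, hz⟩ := Finset.card_pos.1 (by omega : 0 < D.card)
    have h1 : shiftMap t D z = some ((z : ℤ) + t).toNat := by simp [shiftMap, hz]
    have h2 : shiftMap t' D z = some ((z : ℤ) + t').toNat := by simp [shiftMap, hz]
    rw [h, h2] at h1
    have e := Option.some.inj h1
    have b1 := hm.2.2 z hz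
    have b2 := hm'.2.2 z hz
    simp only [Prod.mk.injEq]
    exact ⟨by omega, by trivial⟩
  omega

open Finset in
lemma card_A1 (n : ℕ) : (A1 n).card = n * n := by
  simp [A1, Nat.card_Icc]

open Finset in
lemma card_A2a (n : ℕ) : (A2a n).card = ∑ a ∈ Icc 1 n, (n - a) * (n - a) := by
  rw [Finset.card_eq_sum_card_fiberwise (f := fun p => p.1) (t := Icc 1 n)
    (fun p hp => by simp only [Finset.mem_coe, A2a, mem_filter, mem_product] at hp; exact hp.1.1)]
  apply Finset.sum_congr rfl
  intro a ha
  have hfib : (A2a n).filter (fun p => p.1 = a) = {a} ×ˢ (Icc 1 (n - a) ×ˢ Icc 1 (n - a)) := by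
    ext ⟨b, x, u⟩
    simp only [A2a, mem_filter, mem_product, mem_Icc, mem_singleton]
    simp only [mem_Icc] at ha
    constructor
    · rintro ⟨⟨h1, h2, h3⟩, rfl⟩; omega
    · rintro ⟨rfl, h2, h3⟩; omega
  rw [hfib]
  simp [Nat.card_Icc]

open Finset in
lemma card_A2b (n : ℕ) :
    (A2b n).card = ∑ a ∈ Icc 1 n, (if 2 * a = n then 0 else (n - a) * a) := by
  rw [Finset.card_eq_sum_card_fiberwise (f := fun p => p.1) (t := Icc 1 n)
    (fun p hp => by simp only [Finset.mem_coe, A2b, mem_filter, mem_product] at hp; exact hp.1.1)]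
  apply Finset.sum_congr rfl
  intro a ha
  by_cases hpar : 2 * a = n
  · rw [if_pos hpar]
    rw [Finset.card_eq_zero]
    ext ⟨b, x, u⟩
    simp only [A2b, mem_filter, mem_product, mem_Icc, Finset.notMem_empty, iff_false]
    rintro ⟨⟨h1, h2, h3⟩, rfl⟩
    omega
  · rw [if_neg hpar]
    have hfib : (A2b n).filter (fun p => p.1 = a) = {a} ×ˢ (Icc 1 (n - a) ×ˢ Icc 1 a) := by
      ext ⟨b, x, u⟩
      simp only [A2b, mem_filter, mem_product, mem_Icc, mem_singleton]
      simp only [mem_Icc] at ha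
      constructor
      · rintro ⟨⟨h1, h2, h3⟩, rfl⟩; omega
      · rintro ⟨rfl, h2, h3⟩; omega
    rw [hfib]
    simp [Nat.card_Icc]

def seg (n : ℕ) (t : ℤ) : Finset ℕ :=
  (Finset.Icc 1 n).filter (fun x => 1 ≤ (x:ℤ) + t ∧ (x:ℤ) + t ≤ n)

lemma card_seg (n : ℕ) (t : ℤ) (h1 : -(n:ℤ) ≤ t) (h2 : t ≤ n) :
    (seg n t).card = n - t.natAbs := by
  have : seg n t = Finset.Icc ((1 - t).toNat ⊔ 1) (((n:ℤ) - t).toNat ⊓ n) := by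
    ext x
    simp only [seg, Finset.mem_filter, Finset.mem_Icc]
    omega
  rw [this, Nat.card_Icc]
  omega

open Finset in
lemma count3 (s : Finset ℕ) :
    (s.powerset.filter (fun D => 3 ≤ D.card)).card + (1 + s.card + Nat.choose s.card 2)
      = 2 ^ s.card := by
  classical
  have hsplit := Finset.card_filter_add_card_filter_not (s := s.powerset)
    (p := fun D => 3 ≤ D.card)
  have hneg : s.powerset.filter (fun D => ¬ 3 ≤ D.card)
      = powersetCard 0 s ∪ powersetCard 1 s ∪ powersetCard 2 s := by
    ext D
    simp only [mem_filter, mem_powerset, mem_union, mem_powersetCard, not_le]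
    constructor
    · rintro ⟨h1, h2⟩
      have : D.card = 0 ∨ D.card = 1 ∨ D.card = 2 := by omega
      tauto
    · rintro ((⟨h1, h2⟩ | ⟨h1, h2⟩) | ⟨h1, h2⟩) <;> exact ⟨h1, by omega⟩
  have hd1 : Disjoint (powersetCard 0 s) (powersetCard 1 s) := by
    rw [Finset.disjoint_left]
    intro D hD hD'
    simp only [mem_powersetCard] at hD hD'
    omega
  have hd2 : Disjoint (powersetCard 0 s ∪ powersetCard 1 s) (powersetCard 2 s) := by
    rw [Finset.disjoint_left]
    intro D hD hD'
    simp only [mem_union, mem_powersetCard] at hD hD'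
    rcases hD with h | h <;> omega
  have hcards : (s.powerset.filter (fun D => ¬ 3 ≤ D.card)).card
      = 1 + s.card + Nat.choose s.card 2 := by
    rw [hneg, Finset.card_union_of_disjoint hd2, Finset.card_union_of_disjoint hd1,
      card_powersetCard, card_powersetCard, card_powersetCard]
    simp [Nat.choose_zero_right, Nat.choose_one_right]
  rw [Finset.card_powerset] at hsplit
  rw [← hcards]
  exact hsplit

open Finset in
lemma card_A3_fiber (n : ℕ) (t : ℤ) (ht : t ∈ Finset.Icc (-(n:ℤ)) n) :
    ((A3 n).filter (fun p => p.1 = t)).card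
      = ((seg n t).powerset.filter (fun D => 3 ≤ D.card)).card := by
  have hfib : (A3 n).filter (fun p => p.1 = t)
      = {t} ×ˢ ((seg n t).powerset.filter (fun D => 3 ≤ D.card)) := by
    ext ⟨t', D⟩
    simp only [A3, mem_filter, mem_product, mem_powerset, mem_singleton, mem_Icc] at *
    constructor
    · rintro ⟨⟨⟨htt, hsub⟩, hcard, hbnd⟩, rfl⟩
      refine ⟨rfl, fun z hz => ?_, hcard⟩
      simp only [seg, Finset.mem_filter]
      exact ⟨hsub hz, hbnd z hz⟩
    · rintro ⟨rfl, hsub, hcard⟩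
      refine ⟨⟨⟨ht, fun z hz => (Finset.mem_filter.1 (hsub hz)).1⟩, hcard, fun z hz => ?_⟩, rfl⟩
      exact (Finset.mem_filter.1 (hsub hz)).2
  rw [hfib]
  simp

open Finset in
lemma card_A3 (n : ℕ) : (A3 n).card
    = ∑ t ∈ Finset.Icc (-(n:ℤ)) n,
        ((seg n t).powerset.filter (fun D => 3 ≤ D.card)).card := by
  rw [Finset.card_eq_sum_card_fiberwise (f := fun p => p.1) (t := Finset.Icc (-(n:ℤ)) n)
    (fun p hp => by simp only [Finset.mem_coe, A3, mem_filter, mem_product] at hp; exact hp.1.1)]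
  exact Finset.sum_congr rfl (fun t ht => card_A3_fiber n t ht)

open Finset

lemma sum_id_int (n : ℕ) : 2 * ∑ m ∈ range n, (m : ℤ) = n * (n - 1) := by
  induction n with
  | zero => simp
  | succ n ih => rw [Finset.sum_range_succ]; push_cast; linear_combination ih

lemma sum_sq_int (n : ℕ) : 6 * ∑ m ∈ range n, (m : ℤ) * m = (n - 1) * n * (2 * n - 1) := by
  induction n with
  | zero => simp
  | succ n ih => rw [Finset.sum_range_succ]; push_cast; linear_combination ih

lemma sum_mul_int (n : ℕ) : 6 * ∑ m ∈ range n, (m : ℤ) * (n - m) = (n - 1) * n * (n + 1) := by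
  have h : ∑ m ∈ range n, (m : ℤ) * (n - m)
      = (n : ℤ) * (∑ m ∈ range n, (m : ℤ)) - ∑ m ∈ range n, (m : ℤ) * m := by
    rw [Finset.mul_sum, ← Finset.sum_sub_distrib]
    exact Finset.sum_congr rfl (fun m _ => by ring)
  rw [h]
  linear_combination (3 : ℤ) * (n : ℤ) * sum_id_int n - sum_sq_int n

lemma sum_pow2 (n : ℕ) : ∑ m ∈ range n, (2 : ℤ) ^ m = 2 ^ n - 1 := by
  induction n with
  | zero => simp
  | succ n ih => rw [Finset.sum_range_succ, ih, pow_succ]; ring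

lemma sum_choose2 (n : ℕ) : ∑ m ∈ range n, Nat.choose m 2 = Nat.choose n 3 := by
  induction n with
  | zero => simp
  | succ n ih =>
    rw [Finset.sum_range_succ, ih]
    simp only [Nat.choose_succ_succ, Nat.succ_eq_add_one]
    norm_num
    omega

lemma choose2_int (n : ℕ) : 2 * (Nat.choose n 2 : ℤ) = n * (n - 1) := by
  induction n with
  | zero => simp
  | succ n ih =>
    rw [Nat.choose_succ_succ n 1]
    push_cast [Nat.choose_one_right]
    linear_combination ih

lemma choose3_int (n : ℕ) : 6 * (Nat.choose n 3 : ℤ) = n * (n - 1) * (n - 2) := by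
  induction n with
  | zero => simp
  | succ n ih =>
    rw [Nat.choose_succ_succ n 2]
    push_cast
    linear_combination ih + 3 * choose2_int n

/-- reindex `Icc 1 n` via `a ↦ n - a` -/
lemma sum_Icc_reflect (n : ℕ) (f : ℕ → ℕ) :
    ∑ a ∈ Icc 1 n, f (n - a) = ∑ m ∈ range n, f m := by
  refine Finset.sum_nbij' (i := fun a => n - a) (j := fun m => n - m) ?_ ?_ ?_ ?_ ?_
  · intro a ha; simp only [mem_Icc] at ha; simp only [mem_range]; omega
  · intro a ha; simp only [mem_range] at ha; simp only [mem_Icc]; omega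
  · intro a ha; simp only [mem_Icc] at ha; omega
  · intro a ha; simp only [mem_range] at ha; omega
  · intro a ha; rfl

lemma sum_abs_reindex (n : ℕ) (f : ℕ → ℕ) :
    ∑ t ∈ Finset.Icc (-(n : ℤ)) n, f (n - t.natAbs)
      = f n + 2 * ∑ m ∈ range n, f m := by
  have hsplit : Finset.Icc (-(n : ℤ)) n = Finset.Icc (-(n : ℤ)) (-1) ∪ Finset.Icc 0 n := by
    ext t; simp only [Finset.mem_Icc, Finset.mem_union]; omega
  have hdisj : Disjoint (Finset.Icc (-(n : ℤ)) (-1)) (Finset.Icc 0 (n : ℤ)) := by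
    rw [Finset.disjoint_left]; intro t h1 h2
    simp only [Finset.mem_Icc] at h1 h2; omega
  rw [hsplit, Finset.sum_union hdisj]
  have h1 : ∑ t ∈ Finset.Icc (-(n : ℤ)) (-1), f (n - t.natAbs)
      = ∑ m ∈ range n, f m := by
    rw [← sum_Icc_reflect n f]
    refine Finset.sum_nbij' (i := fun t => (-t).toNat) (j := fun a => -(a : ℤ)) ?_ ?_ ?_ ?_ ?_
    · intro t ht; simp only [Finset.mem_Icc] at ht ⊢; omega
    · intro a ha; simp only [Finset.mem_Icc] at ha ⊢; omega
    · intro t ht; simp only [Finset.mem_Icc] at ht; omega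
    · intro a ha; simp only [Finset.mem_Icc] at ha; omega
    · intro t ht; simp only [Finset.mem_Icc] at ht
      congr 1; omega
  have h2 : ∑ t ∈ Finset.Icc (0 : ℤ) n, f (n - t.natAbs)
      = f n + ∑ m ∈ range n, f m := by
    have hins : Finset.Icc (0 : ℤ) n = insert (0 : ℤ) (Finset.Icc (1 : ℤ) (n : ℤ)) := by
      ext t; simp only [Finset.mem_Icc, Finset.mem_insert]; omega
    rw [hins, Finset.sum_insert (by simp)]
    have h0 : ((0:ℤ).natAbs) = 0 := rfl
    rw [h0, Nat.sub_zero]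
    congr 1
    rw [← sum_Icc_reflect n f]
    refine Finset.sum_nbij' (i := fun t => t.toNat) (j := fun a => (a : ℤ)) ?_ ?_ ?_ ?_ ?_
    · intro t ht; simp only [Finset.mem_Icc] at ht ⊢; omega
    · intro a ha; simp only [Finset.mem_Icc] at ha ⊢; omega
    · intro t ht; simp only [Finset.mem_Icc] at ht; omega
    · intro a ha; simp only [Finset.mem_Icc] at ha; omega
    · intro t ht; simp only [Finset.mem_Icc] at ht
      congr 1; omega
  rw [h1, h2]
  ring


open Finset in
theorem stmt15 (n : ℕ) (hn : 3 ≤ n) :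
    (({α : ℕ → Option ℕ | IsPartialIsometry n α ∧ IsOrderPres α}.ncard : ℤ)) =
      3 * 2 ^ n + ((n : ℤ) + 1) * n * (n - 1) / 6 -
        (1 + (-1) ^ n) * (n : ℤ) ^ 2 / 8 - 2 * n - 2 := by
  classical
  rw [set_eq_FF n hn, Set.ncard_coe_finset, card_FF n, card_A1 n, card_A2a n, card_A2b n,
    card_A3 n]
  -- model count of subsets of size ≥ 3 of an m-element set
  set Fc : ℕ → ℕ := fun m => ((Finset.Icc 1 m).powerset.filter (fun D => 3 ≤ D.card)).card
    with hFcdef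
  have hFc : ∀ m, Fc m + (1 + m + Nat.choose m 2) = 2 ^ m := by
    intro m
    have := count3 (Finset.Icc 1 m)
    simpa [Nat.card_Icc] using this
  -- the A3 sum
  have hseg : ∀ t ∈ Finset.Icc (-(n : ℤ)) n,
      ((seg n t).powerset.filter (fun D => 3 ≤ D.card)).card = Fc (n - t.natAbs) := by
    intro t ht
    simp only [Finset.mem_Icc] at ht
    have h1 := count3 (seg n t)
    rw [card_seg n t ht.1 ht.2] at h1
    have h2 := hFc (n - t.natAbs)
    omega
  rw [Finset.sum_congr rfl hseg, sum_abs_reindex n Fc]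
  -- ℕ-level reindexings
  have hSAnat : (∑ a ∈ Icc 1 n, (n - a) * (n - a)) = ∑ m ∈ range n, m * m :=
    sum_Icc_reflect n (fun m => m * m)
  have hmulnat : (∑ a ∈ Icc 1 n, (n - a) * a) = ∑ m ∈ range n, m * (n - m) := by
    rw [show (∑ a ∈ Icc 1 n, (n - a) * a) = ∑ a ∈ Icc 1 n, ((n - a) * (n - (n - a))) from
      Finset.sum_congr rfl (fun a ha => by
        have := Finset.mem_Icc.1 ha; congr 1; omega)]
    exact sum_Icc_reflect n (fun m => m * (n - m))
  -- cast lemmas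
  have hSa6 : (6 : ℤ) * ((∑ a ∈ Icc 1 n, (n - a) * (n - a) : ℕ) : ℤ)
      = ((n : ℤ) - 1) * n * (2 * n - 1) := by
    rw [hSAnat]
    push_cast
    linear_combination sum_sq_int n
  have hMZ : ((∑ m ∈ range n, m * (n - m) : ℕ) : ℤ) = ∑ m ∈ range n, (m : ℤ) * ((n : ℤ) - m) := by
    rw [Nat.cast_sum]
    refine Finset.sum_congr rfl (fun m hm => ?_)
    have := Finset.mem_range.1 hm
    rw [Nat.cast_mul, Nat.cast_sub (by omega : m ≤ n)]
  have hM6 : (6 : ℤ) * ((∑ m ∈ range n, m * (n - m) : ℕ) : ℤ) = ((n : ℤ) - 1) * n * (n + 1) := by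
    rw [hMZ]; exact sum_mul_int n
  -- Fc values
  have hFcn : ((Fc n : ℕ) : ℤ) + (1 + n + (Nat.choose n 2 : ℤ)) = 2 ^ n := by
    have := hFc n; push_cast at this ⊢; linarith
  have hSF : ((∑ m ∈ range n, Fc m : ℕ) : ℤ)
      + ((n : ℤ) + (∑ m ∈ range n, (m : ℤ)) + (Nat.choose n 3 : ℤ)) = 2 ^ n - 1 := by
    have h1 : ∑ m ∈ range n, ((Fc m : ℤ) + (1 + m + (Nat.choose m 2 : ℤ)))
        = ∑ m ∈ range n, (2 : ℤ) ^ m := by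
      refine Finset.sum_congr rfl (fun m _ => ?_)
      have := hFc m; push_cast at this ⊢; linarith
    rw [sum_pow2 n] at h1
    have h2 : ∑ m ∈ range n, ((Fc m : ℤ) + (1 + m + (Nat.choose m 2 : ℤ)))
        = (∑ m ∈ range n, (Fc m : ℤ)) + ((n : ℤ) + (∑ m ∈ range n, (m : ℤ))
          + (∑ m ∈ range n, (Nat.choose m 2 : ℤ))) := by
      rw [Finset.sum_add_distrib, Finset.sum_add_distrib, Finset.sum_add_distrib]
      simp [Finset.card_range]
    have h3 : (∑ m ∈ range n, (Nat.choose m 2 : ℤ)) = (Nat.choose n 3 : ℤ) := by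
      rw [← Nat.cast_sum, sum_choose2 n]
    rw [h2, h3] at h1
    rw [Nat.cast_sum]
    linarith
  -- division simplifications on the RHS
  have hdiv6 : ((n : ℤ) + 1) * n * (n - 1) / 6 = ((∑ m ∈ range n, m * (n - m) : ℕ) : ℤ) := by
    have h6 : ((n : ℤ) + 1) * n * (n - 1)
        = 6 * ((∑ m ∈ range n, m * (n - m) : ℕ) : ℤ) := by linear_combination -hM6
    rw [h6, Int.mul_ediv_cancel_left _ (by norm_num)]
  have hid := sum_id_int n
  have hc2 := choose2_int n
  have hc3 := choose3_int n
  simp only [Nat.cast_add, Nat.cast_mul, Nat.cast_one, Nat.cast_ofNat, Nat.cast_pow]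
  rcases Nat.even_or_odd n with ⟨k, hk⟩ | ⟨k, hk⟩
  · -- even case, n = k + k
    have hkmem : k ∈ Icc 1 n := by simp only [mem_Icc]; omega
    have hB : (∑ a ∈ Icc 1 n, (if 2 * a = n then 0 else (n - a) * a)) + k * k
        = ∑ a ∈ Icc 1 n, (n - a) * a := by
      have e1 := Finset.add_sum_erase (Icc 1 n)
        (fun a => if 2 * a = n then 0 else (n - a) * a) hkmem
      have e2 := Finset.add_sum_erase (Icc 1 n) (fun a => (n - a) * a) hkmem
      have e3 : ∑ a ∈ (Icc 1 n).erase k, (if 2 * a = n then 0 else (n - a) * a)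
          = ∑ a ∈ (Icc 1 n).erase k, (n - a) * a := by
        refine Finset.sum_congr rfl (fun a ha => ?_)
        have h := Finset.mem_erase.1 ha
        rw [if_neg (by omega)]
      rw [if_pos (by omega)] at e1
      have hfk : (n - k) * k = k * k := by congr 1; omega
      rw [hfk] at e2
      omega
    have hneg1 : ((-1 : ℤ)) ^ n = 1 := Even.neg_one_pow ⟨k, by omega⟩
    have hdiv8 : (1 + (-1 : ℤ) ^ n) * (n : ℤ) ^ 2 / 8 = (k : ℤ) * k := by
      rw [hneg1]
      have h8 : (1 + 1 : ℤ) * (n : ℤ) ^ 2 = 8 * ((k : ℤ) * k) := by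
        have : (n : ℤ) = 2 * k := by push_cast [hk]; ring
        rw [this]; ring
      rw [h8, Int.mul_ediv_cancel_left _ (by norm_num)]
    rw [hdiv6, hdiv8]
    have hBZ : ((∑ a ∈ Icc 1 n, (if 2 * a = n then 0 else (n - a) * a) : ℕ) : ℤ)
        + (k : ℤ) * k = ((∑ m ∈ range n, m * (n - m) : ℕ) : ℤ) := by
      rw [← hmulnat]
      exact_mod_cast hB
    apply mul_left_cancel₀ (show (6 : ℤ) ≠ 0 by norm_num)
    linear_combination 6 * hBZ + 6 * hFcn + 12 * hSF + hSa6 - 3 * hc2 - 6 * hid - 2 * hc3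
  · -- odd case, n = 2k + 1
    have hB : (∑ a ∈ Icc 1 n, (if 2 * a = n then 0 else (n - a) * a))
        = ∑ a ∈ Icc 1 n, (n - a) * a := by
      refine Finset.sum_congr rfl (fun a ha => ?_)
      rw [if_neg (by omega)]
    have hneg1 : ((-1 : ℤ)) ^ n = -1 := Odd.neg_one_pow ⟨k, by omega⟩
    have hdiv8 : (1 + (-1 : ℤ) ^ n) * (n : ℤ) ^ 2 / 8 = 0 := by
      rw [hneg1]; norm_num
    rw [hdiv6, hdiv8]
    have hBZ : ((∑ a ∈ Icc 1 n, (if 2 * a = n then 0 else (n - a) * a) : ℕ) : ℤ)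
        = ((∑ m ∈ range n, m * (n - m) : ℕ) : ℤ) := by
      rw [← hmulnat]
      exact_mod_cast hB
    apply mul_left_cancel₀ (show (6 : ℤ) ≠ 0 by norm_num)
    linear_combination 6 * hBZ + 6 * hFcn + 12 * hSF + hSa6 - 3 * hc2 - 6 * hid - 2 * hc3
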